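/- Let a > 0, c ≠ 0, δ ∈ (0, |a/c|), r = a + |c|δ, and suppose u is a solution of the model DDE with |u(t)| ≤ δ for all t ∈ [−r, 3r]. Then: (i) |u'(t)| ≤ (|μ|+|σ|)δ for all t ∈ [0, 3r]; (ii) for all t ∈ [r, 2r], the function g(t) = u(t − a − c u(t)) satisfies |g'(t)| ≤ D1 δ, where D1 = (|μ|+|σ|)(1 + (|μ|+|σ|)|c|δ); (iii) for all t ∈ [2r, 3r], |g''(t)| ≤ D2 δ, where D2 = (D1² + (|μ|+|σ|)³|c|δ)(1 + |σ c|δ). -/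

import Mathlib

/-- A solution of the model state-dependent DDE
`u'(t) = μ u(t) + σ u(t - a - c u(t))` for `t ≥ 0`, with initial function `φ` on `(-∞,0]`. -/
def IsModelSolution (μ σ c a : ℝ) (φ u : ℝ → ℝ) : Prop :=
  Continuous u ∧ (∀ t ≤ (0 : ℝ), u t = φ t) ∧
    ∀ t, (0 : ℝ) ≤ t →
      HasDerivWithinAt u (μ * u t + σ * u (t - a - c * u t)) (Set.Ici (0 : ℝ)) t

/-- derivative bounds of Section 4 of Humphries–Magpantay:
if a solution stays in `[-δ,δ]` on `[-r, 3r]` with `r = a + |c|δ`, then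
(i) `|u'(t)| ≤ (|μ|+|σ|)δ` on `[0, 3r]` (where `u'(t)` is the right-hand side of the DDE),
(ii) `g(t) = u(t - a - c u(t))` is differentiable with `|g'(t)| ≤ D₁ δ` on `[r, 2r]`, and
(iii) `g'` is differentiable with `|g''(t)| ≤ D₂ δ` on `[2r, 3r]`. -/
theorem stmt_8 (μ σ c a δ : ℝ) (ha : 0 < a) (hc : c ≠ 0)
    (hδ0 : 0 < δ) (hδ1 : δ < |a / c|)
    (φ u : ℝ → ℝ) (hsol : IsModelSolution μ σ c a φ u)
    (hbd : ∀ t ∈ Set.Icc (-(a + |c| * δ)) (3 * (a + |c| * δ)), |u t| ≤ δ) :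
    (∀ t ∈ Set.Icc (0 : ℝ) (3 * (a + |c| * δ)),
      |μ * u t + σ * u (t - a - c * u t)| ≤ (|μ| + |σ|) * δ) ∧
    ∃ g' g'' : ℝ → ℝ,
      (∀ t ∈ Set.Icc (a + |c| * δ) (3 * (a + |c| * δ)),
        HasDerivWithinAt (fun s => u (s - a - c * u s)) (g' t)
          (Set.Icc (a + |c| * δ) (3 * (a + |c| * δ))) t) ∧
      (∀ t ∈ Set.Icc (a + |c| * δ) (2 * (a + |c| * δ)),
        |g' t| ≤ (|μ| + |σ|) * (1 + (|μ| + |σ|) * |c| * δ) * δ) ∧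
      (∀ t ∈ Set.Icc (2 * (a + |c| * δ)) (3 * (a + |c| * δ)),
        HasDerivWithinAt g' (g'' t)
          (Set.Icc (2 * (a + |c| * δ)) (3 * (a + |c| * δ))) t) ∧
      (∀ t ∈ Set.Icc (2 * (a + |c| * δ)) (3 * (a + |c| * δ)),
        |g'' t| ≤ (((|μ| + |σ|) * (1 + (|μ| + |σ|) * |c| * δ)) ^ 2
            + (|μ| + |σ|) ^ 3 * |c| * δ) * (1 + |σ * c| * δ) * δ) := by
  obtain ⟨hu_cont, hφ, hderiv⟩ := hsol
  set r := a + |c| * δ with hr_def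
  have hcδ : |c| * δ < a := by
    have hc' : 0 < |c| := abs_pos.mpr hc
    rw [abs_div, abs_of_pos ha, lt_div_iff₀ hc'] at hδ1
    linarith
  have hcδ0 : 0 ≤ |c| * δ := by positivity
  have hr0 : 0 < r := by simp only [hr_def]; linarith
  -- bound |c * u s|
  have hcu : ∀ s ∈ Set.Icc (-r) (3*r), |c * u s| ≤ |c| * δ := fun s hs => by
    rw [abs_mul]
    exact mul_le_mul_of_nonneg_left (hbd s hs) (abs_nonneg c)
  -- memberships of η s = s - a - c * u s
  have hη1 : ∀ s ∈ Set.Icc (0:ℝ) (3*r), s - a - c * u s ∈ Set.Icc (-r) (3*r) := by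
    intro s hs
    obtain ⟨h1, h2⟩ := abs_le.mp (hcu s ⟨by linarith [hs.1], hs.2⟩)
    exact ⟨by simp only [hr_def] at *; linarith [hs.1], by linarith [hs.2]⟩
  have hη2 : ∀ s ∈ Set.Icc r (3*r), s - a - c * u s ∈ Set.Icc (0:ℝ) (3*r) := by
    intro s hs
    obtain ⟨h1, h2⟩ := abs_le.mp (hcu s ⟨by linarith [hs.1], hs.2⟩)
    exact ⟨by simp only [hr_def] at *; linarith [hs.1], by linarith [hs.2]⟩
  have hη3 : ∀ s ∈ Set.Icc (2*r) (3*r), s - a - c * u s ∈ Set.Icc r (3*r) := by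
    intro s hs
    obtain ⟨h1, h2⟩ := abs_le.mp (hcu s ⟨by linarith [hs.1], hs.2⟩)
    exact ⟨by simp only [hr_def] at *; linarith [hs.1], by linarith [hs.2]⟩
  -- part (i)
  have key1 : ∀ s ∈ Set.Icc (0:ℝ) (3*r),
      |μ * u s + σ * u (s - a - c * u s)| ≤ (|μ| + |σ|) * δ := by
    intro s hs
    have h1 : |u s| ≤ δ := hbd s ⟨by linarith [hs.1], hs.2⟩
    have h2 : |u (s - a - c * u s)| ≤ δ := hbd _ (hη1 s hs)
    calc |μ * u s + σ * u (s - a - c * u s)|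
        ≤ |μ * u s| + |σ * u (s - a - c * u s)| := abs_add_le _ _
      _ = |μ| * |u s| + |σ| * |u (s - a - c * u s)| := by rw [abs_mul, abs_mul]
      _ ≤ |μ| * δ + |σ| * δ := add_le_add
          (mul_le_mul_of_nonneg_left h1 (abs_nonneg μ))
          (mul_le_mul_of_nonneg_left h2 (abs_nonneg σ))
      _ = (|μ| + |σ|) * δ := by ring
  refine ⟨key1, ?_⟩
  set F : ℝ → ℝ := fun s => μ * u s + σ * u (s - a - c * u s) with hF_def
  set G' : ℝ → ℝ := fun t => F (t - a - c * u t) * (1 - c * F t) with hG'_def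
  set F' : ℝ → ℝ := fun s => μ * F s + σ * G' s with hF'_def
  set G'' : ℝ → ℝ := fun t =>
    F' (t - a - c * u t) * (1 - c * F t) ^ 2 + F (t - a - c * u t) * (-(c * F' t)) with hG''_def
  have hsub1 : Set.Icc r (3*r) ⊆ Set.Ici (0:ℝ) := fun x hx => le_trans hr0.le hx.1
  have hsub2 : Set.Icc (2*r) (3*r) ⊆ Set.Icc r (3*r) := fun x hx => ⟨by linarith [hx.1], hx.2⟩
  -- derivative of η within sets
  have hηd : ∀ s ∈ Set.Ici (0:ℝ),
      HasDerivWithinAt (fun x => x - a - c * u x) (1 - c * F s) (Set.Ici 0) s := by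
    intro s hs
    have h := ((hasDerivWithinAt_id s (Set.Ici (0:ℝ))).sub_const a).sub
      ((hderiv s hs).const_mul c)
    exact h
  -- derivative of g = u ∘ η
  have hgd : ∀ t ∈ Set.Icc r (3*r),
      HasDerivWithinAt (fun s => u (s - a - c * u s)) (G' t) (Set.Icc r (3*r)) t := by
    intro t ht
    have hηt : t - a - c * u t ∈ Set.Icc (0:ℝ) (3*r) := hη2 t ht
    have h := HasDerivWithinAt.comp t (hderiv _ hηt.1) ((hηd t (hsub1 ht)).mono hsub1)
      (fun x hx => (hη2 x hx).1)
    simpa [Function.comp_def, hG'_def, hF_def] using h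
  -- derivative of F
  have hFd : ∀ s ∈ Set.Icc r (3*r),
      HasDerivWithinAt F (F' s) (Set.Icc r (3*r)) s := by
    intro s hs
    have h := (((hderiv s (hsub1 hs)).mono hsub1).const_mul μ).add ((hgd s hs).const_mul σ)
    simpa [hF_def, hF'_def, hG'_def, Pi.add_def] using h
  -- derivative of g'
  have hg'd : ∀ t ∈ Set.Icc (2*r) (3*r),
      HasDerivWithinAt G' (G'' t) (Set.Icc (2*r) (3*r)) t := by
    intro t ht
    have hηt : t - a - c * u t ∈ Set.Icc r (3*r) := hη3 t ht
    have hA : HasDerivWithinAt (fun s => F (s - a - c * u s))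
        (F' (t - a - c * u t) * (1 - c * F t)) (Set.Icc (2*r) (3*r)) t := by
      have h := HasDerivWithinAt.comp t (hFd _ hηt)
        (((hηd t (hsub1 (hsub2 ht))).mono (fun x hx => hsub1 (hsub2 hx))))
        (fun x hx => hη3 x hx)
      simpa [Function.comp_def] using h
    have hB : HasDerivWithinAt (fun s => 1 - c * F s) (-(c * F' t))
        (Set.Icc (2*r) (3*r)) t :=
      (((hFd t (hsub2 ht)).mono hsub2).const_mul c).const_sub 1
    have h := hA.mul hB
    refine h.congr_deriv ?_
    simp only [hG''_def, hG'_def]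
    ring
  -- bound on F' on [r, 3r]
  have hG'bd : ∀ t ∈ Set.Icc r (3*r),
      |G' t| ≤ (|μ| + |σ|) * (1 + (|μ| + |σ|) * |c| * δ) * δ := by
    intro t ht
    have h1 : |F (t - a - c * u t)| ≤ (|μ| + |σ|) * δ := key1 _ (hη2 t ht)
    have h2 : |F t| ≤ (|μ| + |σ|) * δ := key1 t ⟨hsub1 ht, ht.2⟩
    have h3 : |1 - c * F t| ≤ 1 + |c| * ((|μ| + |σ|) * δ) := by
      calc |1 - c * F t| ≤ |1| + |c * F t| := abs_sub _ _
        _ = 1 + |c| * |F t| := by rw [abs_one, abs_mul]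
        _ ≤ 1 + |c| * ((|μ| + |σ|) * δ) := by
            have := mul_le_mul_of_nonneg_left h2 (abs_nonneg c); linarith
    calc |G' t| = |F (t - a - c * u t)| * |1 - c * F t| := abs_mul _ _
      _ ≤ (|μ| + |σ|) * δ * (1 + |c| * ((|μ| + |σ|) * δ)) := by
          apply mul_le_mul h1 h3 (abs_nonneg _)
          positivity
      _ = (|μ| + |σ|) * (1 + (|μ| + |σ|) * |c| * δ) * δ := by ring
  have hF'bd : ∀ s ∈ Set.Icc r (3*r),
      |F' s| ≤ (|μ| * (|μ| + |σ|) + |σ| * ((|μ| + |σ|) * (1 + (|μ| + |σ|) * |c| * δ))) * δ := by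
    intro s hs
    have h1 : |F s| ≤ (|μ| + |σ|) * δ := key1 s ⟨hsub1 hs, hs.2⟩
    have h2 := hG'bd s hs
    calc |F' s| ≤ |μ * F s| + |σ * G' s| := abs_add_le _ _
      _ = |μ| * |F s| + |σ| * |G' s| := by rw [abs_mul, abs_mul]
      _ ≤ |μ| * ((|μ| + |σ|) * δ) + |σ| * ((|μ| + |σ|) * (1 + (|μ| + |σ|) * |c| * δ) * δ) :=
          add_le_add (mul_le_mul_of_nonneg_left h1 (abs_nonneg μ))
            (mul_le_mul_of_nonneg_left h2 (abs_nonneg σ))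
      _ = (|μ| * (|μ| + |σ|) + |σ| * ((|μ| + |σ|) * (1 + (|μ| + |σ|) * |c| * δ))) * δ := by ring
  refine ⟨G', G'', hgd, ?_, hg'd, ?_⟩
  · intro t ht
    exact hG'bd t ⟨ht.1, by linarith [ht.2, hr0]⟩
  · intro t ht
    set K := (|μ| * (|μ| + |σ|) + |σ| * ((|μ| + |σ|) * (1 + (|μ| + |σ|) * |c| * δ))) with hK_def
    have hηt : t - a - c * u t ∈ Set.Icc r (3*r) := hη3 t ht
    have h1 : |F' (t - a - c * u t)| ≤ K * δ := hF'bd _ hηt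
    have h2 : |F t| ≤ (|μ| + |σ|) * δ := key1 t ⟨hsub1 (hsub2 ht), ht.2⟩
    have h3 : |1 - c * F t| ≤ 1 + |c| * ((|μ| + |σ|) * δ) := by
      calc |1 - c * F t| ≤ |1| + |c * F t| := abs_sub _ _
        _ = 1 + |c| * |F t| := by rw [abs_one, abs_mul]
        _ ≤ 1 + |c| * ((|μ| + |σ|) * δ) := by
            have := mul_le_mul_of_nonneg_left h2 (abs_nonneg c); linarith
    have h4 : |F (t - a - c * u t)| ≤ (|μ| + |σ|) * δ := key1 _ (hη2 _ (hsub2 ht))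
    have h5 : |F' t| ≤ K * δ := hF'bd t (hsub2 ht)
    have hKnn : 0 ≤ K := by positivity
    calc |G'' t| ≤ |F' (t - a - c * u t) * (1 - c * F t) ^ 2|
          + |F (t - a - c * u t) * (-(c * F' t))| := abs_add_le _ _
      _ = |F' (t - a - c * u t)| * |1 - c * F t| ^ 2
          + |F (t - a - c * u t)| * (|c| * |F' t|) := by
          rw [abs_mul, abs_mul, abs_neg, abs_mul, abs_pow]
      _ ≤ K * δ * (1 + |c| * ((|μ| + |σ|) * δ)) ^ 2
          + (|μ| + |σ|) * δ * (|c| * (K * δ)) := by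
          apply add_le_add
          · apply mul_le_mul h1 _ (by positivity) (by positivity)
            exact pow_le_pow_left₀ (abs_nonneg _) h3 2
          · apply mul_le_mul h4 _ (by positivity) (by positivity)
            exact mul_le_mul_of_nonneg_left h5 (abs_nonneg c)
      _ ≤ (((|μ| + |σ|) * (1 + (|μ| + |σ|) * |c| * δ)) ^ 2
            + (|μ| + |σ|) ^ 3 * |c| * δ) * (1 + |σ * c| * δ) * δ := by
          rw [abs_mul, hK_def]
          apply le_of_eq
          ring
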